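/- Let G be a finite simple graph with an injective identifier function ID : V(G) → ℕ, and for a vertex u let OUT(u) = {w ∈ N(u) : (deg(u), ID(u)) < (deg(w), ID(w))} with pairs compared lexicographically. Let Good ⊆ V(G) with ∑_{v ∈ Good} deg(v) ≥ |E(G)|/2, for each v ∈ Good let IN*(v) be a set of neighbors u of v with (deg(u), ID(u)) < (deg(v), ID(v)), and let y : V(G) → ℝ be nonnegative. Assume that for every v ∈ Good, 1/1000 ≤ ∑_{u ∈ IN*(v)} y_u ≤ 1/3, and that for every vertex u, ∑_{w ∈ OUT(u)} y_w ≤ 1/4. Define 𝐮(y) = ∑_{v ∈ Good} (deg(v)/2) · ∑_{u ∈ IN*(v)} y_u and 𝐜(y) = ∑_{v ∈ Good} (deg(v)/2) · ( ∑_{u ∈ IN*(v)} ∑_{u' ∈ IN*(v)} y_u·y_{u'} + ∑_{u ∈ IN*(v)} ∑_{w ∈ OUT(u)} y_u·y_w ). Then 𝐮(y) − 𝐜(y) ≥ |E(G)|/12000. -/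
import Mathlib


/-- Under the hypotheses of the rounding setup (Good vertices carrying at
least half of the edge-degree mass, 1/1000 ≤ ∑_{u∈IN*(v)} y_u ≤ 1/3 for v ∈ Good, and
∑_{w∈OUT(u)} y_w ≤ 1/4 for all u), the pessimistic estimator satisfies
𝐮(y) − 𝐜(y) ≥ |E(G)|/12000. -/
theorem stmt_15 {V : Type*} [Fintype V] [DecidableEq V]
    (G : SimpleGraph V) [DecidableRel G.Adj]
    (ID : V → ℕ) (hID : Function.Injective ID)
    (Good : Finset V) (INstar : V → Finset V)
    (hGood : (G.edgeFinset.card : ℝ) / 2 ≤ ∑ v ∈ Good, (G.degree v : ℝ))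
    (hINstar : ∀ v ∈ Good, ∀ u ∈ INstar v, G.Adj u v ∧
      (G.degree u < G.degree v ∨ (G.degree u = G.degree v ∧ ID u < ID v)))
    (y : V → ℝ) (hy : ∀ v, 0 ≤ y v)
    (hIN : ∀ v ∈ Good, (1/1000 : ℝ) ≤ ∑ u ∈ INstar v, y u ∧ ∑ u ∈ INstar v, y u ≤ 1/3)
    (hOUT : ∀ u : V,
      ∑ w ∈ (G.neighborFinset u).filter (fun w =>
          G.degree u < G.degree w ∨ (G.degree u = G.degree w ∧ ID u < ID w)), y w ≤ 1/4) :
    (G.edgeFinset.card : ℝ) / 12000 ≤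
      (∑ v ∈ Good, (G.degree v : ℝ)/2 * ∑ u ∈ INstar v, y u) -
        ∑ v ∈ Good, (G.degree v : ℝ)/2 *
          ((∑ u ∈ INstar v, ∑ u' ∈ INstar v, y u * y u') +
            ∑ u ∈ INstar v,
              ∑ w ∈ (G.neighborFinset u).filter (fun w =>
                G.degree u < G.degree w ∨ (G.degree u = G.degree w ∧ ID u < ID w)),
                y u * y w) := by
  rw [← Finset.sum_sub_distrib]
  have key : ∀ v ∈ Good,
      (G.degree v : ℝ) / 4800 ≤
        (G.degree v : ℝ)/2 * ∑ u ∈ INstar v, y u -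
        (G.degree v : ℝ)/2 *
          ((∑ u ∈ INstar v, ∑ u' ∈ INstar v, y u * y u') +
            ∑ u ∈ INstar v,
              ∑ w ∈ (G.neighborFinset u).filter (fun w =>
                G.degree u < G.degree w ∨ (G.degree u = G.degree w ∧ ID u < ID w)),
                y u * y w) := by
    intro v hv
    set S : ℝ := ∑ u ∈ INstar v, y u with hS
    obtain ⟨hS1, hS2⟩ := hIN v hv
    have hsq : (∑ u ∈ INstar v, ∑ u' ∈ INstar v, y u * y u') = S * S := by
      rw [hS, Finset.sum_mul_sum]
    have hcross : (∑ u ∈ INstar v,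
        ∑ w ∈ (G.neighborFinset u).filter (fun w =>
          G.degree u < G.degree w ∨ (G.degree u = G.degree w ∧ ID u < ID w)),
          y u * y w) ≤ S / 4 := by
      have : ∀ u ∈ INstar v,
          (∑ w ∈ (G.neighborFinset u).filter (fun w =>
            G.degree u < G.degree w ∨ (G.degree u = G.degree w ∧ ID u < ID w)),
            y u * y w) ≤ y u * (1/4) := by
        intro u _
        rw [← Finset.mul_sum]
        exact mul_le_mul_of_nonneg_left (hOUT u) (hy u)
      calc _ ≤ ∑ u ∈ INstar v, y u * (1/4) := Finset.sum_le_sum this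
        _ = S / 4 := by rw [← Finset.sum_mul]; ring
    have hd : (0:ℝ) ≤ (G.degree v : ℝ) := Nat.cast_nonneg _
    rw [hsq]
    have hlin : (G.degree v : ℝ)/2 * (S * S + S/4) ≤
        (G.degree v : ℝ)/2 * S - (G.degree v : ℝ)/4800 := by
      have hkey : S * S + S/4 ≤ S - 1/2400 := by nlinarith
      have := mul_le_mul_of_nonneg_left hkey (by linarith : (0:ℝ) ≤ (G.degree v : ℝ)/2)
      nlinarith
    have hmono : (G.degree v : ℝ)/2 *
        (S * S + ∑ u ∈ INstar v,
          ∑ w ∈ (G.neighborFinset u).filter (fun w =>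
            G.degree u < G.degree w ∨ (G.degree u = G.degree w ∧ ID u < ID w)),
            y u * y w) ≤ (G.degree v : ℝ)/2 * (S * S + S/4) :=
      mul_le_mul_of_nonneg_left (by linarith) (by linarith)
    linarith
  have h1 := Finset.sum_le_sum key
  rw [← Finset.sum_div] at h1
  have h0 : (0:ℝ) ≤ (G.edgeFinset.card : ℝ) := Nat.cast_nonneg _
  linarith
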